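/- Let q ≥ 2 and a be integers with 1 ≤ a < q. Then | Σ_{n ≥ 1, n ≡ a (mod q)} (Λ(n)/n)·e^{−n/q²} − Λ(a)/a | ≤ 2·(log q)²/q + 3.935·(log q)/q. -/

import Mathlib

open ArithmeticFunction

attribute [local instance] Classical.propDecidable

noncomputable section

set_option maxHeartbeats 2000000 in
/-- **Proposition (the first term dominates the smoothed sum).** If `1 ≤ a < q`, then
`|Σ_{n ≡ a (mod q)} (Λ(n)/n) e^{−n/q²} − Λ(a)/a| ≤ 2(log q)²/q + 3.935 (log q)/q`. -/
theorem smoothed_vonMangoldt_progression (q a : ℕ) (ha : 1 ≤ a) (haq : a < q) :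
    |(∑' n : ℕ, if (n : ZMod q) = (a : ZMod q) then
        vonMangoldt n / n * Real.exp (-(n : ℝ) / (q : ℝ) ^ 2) else 0)
      - vonMangoldt a / a|
      ≤ 2 * (Real.log q) ^ 2 / q + 3.935 * Real.log q / q := by
  have hq2 : 2 ≤ q := by omega
  have hq0 : 0 < q := by omega
  have hQ2 : (2:ℝ) ≤ (q:ℝ) := by exact_mod_cast hq2
  have hQ0 : (0:ℝ) < q := by linarith
  have hA0 : (0:ℝ) < a := by exact_mod_cast ha
  set x : ℝ := Real.exp (-(1/(q:ℝ))) with hxdef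
  have hx0 : 0 < x := Real.exp_pos _
  have hx1 : x < 1 := by
    rw [hxdef]
    apply Real.exp_lt_one_iff.mpr
    simp only [neg_lt, neg_zero]
    positivity
  have hxabs : |x| < 1 := by rwa [abs_of_pos hx0]
  set g : ℕ → ℝ := fun k => vonMangoldt (a + k * q) / ((a + k * q : ℕ) : ℝ)
      * Real.exp (-((a + k * q : ℕ) : ℝ) / (q : ℝ) ^ 2) with hgdef
  -- Step 1 : reindex the sum
  have hreindex : (∑' n : ℕ, if (n : ZMod q) = (a : ZMod q) then
      vonMangoldt n / n * Real.exp (-(n : ℝ) / (q : ℝ) ^ 2) else 0) = ∑' k : ℕ, g k := by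
    set f : ℕ → ℝ := fun n => if (n : ZMod q) = (a : ZMod q) then
        vonMangoldt n / n * Real.exp (-(n : ℝ) / (q : ℝ) ^ 2) else 0 with hf
    have hinj : Function.Injective (fun k : ℕ => a + k * q) := by
      intro k1 k2 h
      simp only [add_right_inj] at h
      exact Nat.eq_of_mul_eq_mul_right hq0 h
    have hsupp : Function.support f ⊆ Set.range (fun k : ℕ => a + k * q) := by
      intro n hn
      simp only [Function.mem_support] at hn
      have hc : (n : ZMod q) = (a : ZMod q) := by
        by_contra hc
        exact hn (if_neg hc)
      rw [ZMod.natCast_eq_natCast_iff] at hc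
      have hmod : n % q = a := by
        have h2 : n % q = a % q := hc
        rwa [Nat.mod_eq_of_lt haq] at h2
      exact ⟨n / q, by simp only []; rw [← hmod, mul_comm, Nat.mod_add_div]⟩
    have hbij := Function.Injective.tsum_eq hinj (f := f) hsupp
    rw [← hbij]
    refine tsum_congr fun k => ?_
    have hcond : ((a + k * q : ℕ) : ZMod q) = (a : ZMod q) := by
      push_cast [ZMod.natCast_self]
      ring
    simp only [hf, if_pos hcond, hgdef]
  -- g is nonnegative
  have hg0 : ∀ k, 0 ≤ g k := by
    intro k
    apply mul_nonneg (div_nonneg vonMangoldt_nonneg (Nat.cast_nonneg _)) (Real.exp_pos _).le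
  -- g k ≤ x ^ k
  have hgle : ∀ k, g k ≤ x ^ k := by
    intro k
    set n : ℕ := a + k * q with hn
    have hN0 : (0:ℝ) < n := by
      have : 0 < n := by omega
      exact_mod_cast this
    have hNge : (k:ℝ) * q ≤ (n:ℝ) := by
      have h : k * q ≤ n := by omega
      have h2 : ((k * q : ℕ) : ℝ) ≤ (n:ℝ) := Nat.cast_le.mpr h
      push_cast at h2
      linarith
    have hdiv : vonMangoldt n / (n:ℝ) ≤ 1 := by
      rw [div_le_one hN0]
      calc (vonMangoldt n : ℝ) ≤ Real.log n := vonMangoldt_le_log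
        _ ≤ (n:ℝ) - 1 := Real.log_le_sub_one_of_pos hN0
        _ ≤ (n:ℝ) := by linarith
    have hexp : Real.exp (-(n:ℝ) / (q:ℝ)^2) ≤ x ^ k := by
      have hxp : x ^ k = Real.exp ((k:ℕ) * (-(1/(q:ℝ)))) := by
        rw [Real.exp_nat_mul]
      rw [hxp]
      apply Real.exp_le_exp.mpr
      rw [neg_div]
      calc -((n:ℝ) / (q:ℝ)^2) ≤ -((k:ℝ) * (q:ℝ) / (q:ℝ)^2) := by
            apply neg_le_neg
            gcongr
        _ = (k:ℝ) * -(1/(q:ℝ)) := by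
            field_simp
    calc g k ≤ 1 * x ^ k := by
          apply mul_le_mul hdiv hexp (Real.exp_pos _).le (by norm_num)
      _ = x ^ k := one_mul _
  have hsumg : Summable g :=
    Summable.of_nonneg_of_le hg0 hgle (summable_geometric_of_lt_one hx0.le hx1)
  have hsplit : (∑' k : ℕ, g k) = g 0 + ∑' k : ℕ, g (k + 1) := Summable.tsum_eq_zero_add hsumg
  have hg0eq : g 0 = vonMangoldt a / (a:ℝ) * Real.exp (-(a:ℝ) / (q:ℝ)^2) := by
    simp [hgdef]
  -- termwise tail bound
  set L : ℝ := Real.log q + Real.log ((q:ℝ)+1) with hLdef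
  have hlogq0 : (0:ℝ) ≤ Real.log q := Real.log_nonneg (by linarith)
  have hlogq10 : (0:ℝ) ≤ Real.log ((q:ℝ)+1) := Real.log_nonneg (by linarith)
  have hL0 : 0 ≤ L := by rw [hLdef]; linarith
  have htermwise : ∀ k : ℕ, g (k+1) ≤ L / q * (x ^ (k+1) / ((k:ℝ)+1))
      + (1/((q:ℝ)*((q:ℝ)+1))) * x ^ (k+1) := by
    intro k
    set n : ℕ := a + (k+1) * q with hn
    have hNge : ((k:ℝ)+1) * q ≤ (n:ℝ) := by
      have h : (k+1) * q ≤ n := by omega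
      have h2 : (((k+1) * q : ℕ) : ℝ) ≤ (n:ℝ) := Nat.cast_le.mpr h
      push_cast at h2
      linarith
    have hN0 : (0:ℝ) < n := by
      have : 0 < n := by omega
      exact_mod_cast this
    have hNle : (n:ℝ) + 1 ≤ (q:ℝ) * ((k:ℝ)+2) := by
      have hle : n + 1 ≤ q * (k+2) := by
        have h1 : a + 1 ≤ q := haq
        calc n + 1 = a + 1 + (k+1)*q := by omega
          _ ≤ q + (k+1)*q := by omega
          _ = q * (k+2) := by ring
      have h2 : ((n + 1 : ℕ) : ℝ) ≤ ((q * (k+2) : ℕ) : ℝ) := Nat.cast_le.mpr hle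
      push_cast at h2
      linarith
    have hΛ : vonMangoldt n ≤ L + ((k:ℝ)+1)/((q:ℝ)+1) := by
      have h1 : vonMangoldt n ≤ Real.log n := vonMangoldt_le_log
      have h2 : Real.log n ≤ Real.log ((q:ℝ) * ((k:ℝ)+2)) :=
        Real.log_le_log hN0 (by linarith)
      have h3 : Real.log ((q:ℝ) * ((k:ℝ)+2)) = Real.log q + Real.log ((k:ℝ)+2) :=
        Real.log_mul (by positivity) (by positivity)
      have h4 : Real.log ((k:ℝ)+2) ≤ Real.log ((q:ℝ)+1) + ((k:ℝ)+1)/((q:ℝ)+1) := by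
        have h5 : Real.log (((k:ℝ)+2)/((q:ℝ)+1)) ≤ ((k:ℝ)+2)/((q:ℝ)+1) - 1 :=
          Real.log_le_sub_one_of_pos (by positivity)
        have h6 : Real.log (((k:ℝ)+2)/((q:ℝ)+1))
            = Real.log ((k:ℝ)+2) - Real.log ((q:ℝ)+1) :=
          Real.log_div (by positivity) (by positivity)
        have h7 : ((k:ℝ)+2)/((q:ℝ)+1) - 1 ≤ ((k:ℝ)+1)/((q:ℝ)+1) := by
          rw [div_sub' (by positivity), div_le_div_iff₀ (by positivity) (by positivity)]
          nlinarith
        linarith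
      rw [hLdef]
      linarith
    have hexp : Real.exp (-(n:ℝ) / (q:ℝ)^2) ≤ x ^ (k+1) := by
      have hxp : x ^ (k+1) = Real.exp (((k+1 : ℕ)) * (-(1/(q:ℝ)))) := by
        rw [Real.exp_nat_mul]
      rw [hxp]
      apply Real.exp_le_exp.mpr
      push_cast
      rw [neg_div]
      calc -((n:ℝ) / (q:ℝ)^2) ≤ -(((k:ℝ)+1) * (q:ℝ) / (q:ℝ)^2) := by
            apply neg_le_neg
            gcongr
        _ = ((k:ℝ)+1) * -(1/(q:ℝ)) := by
            field_simp
    have hdiv : vonMangoldt n / (n:ℝ)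
        ≤ (L + ((k:ℝ)+1)/((q:ℝ)+1)) / (((k:ℝ)+1) * q) :=
      div_le_div₀ (by positivity) hΛ (by positivity) hNge
    calc vonMangoldt n / (n:ℝ) * Real.exp (-(n:ℝ) / (q:ℝ)^2)
        ≤ (L + ((k:ℝ)+1)/((q:ℝ)+1)) / (((k:ℝ)+1) * q) * x ^ (k+1) := by
          apply mul_le_mul hdiv hexp (Real.exp_pos _).le (by positivity)
      _ = L / q * (x ^ (k+1) / ((k:ℝ)+1)) + (1/((q:ℝ)*((q:ℝ)+1))) * x ^ (k+1) := by
          rw [hLdef]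
          field_simp
  -- sum of the bounding series
  have hxle : x ≤ (q:ℝ)/((q:ℝ)+1) := by
    have h1 : 1 + 1/(q:ℝ) ≤ Real.exp (1/(q:ℝ)) := by
      have := Real.add_one_le_exp (1/(q:ℝ)); linarith
    have h2 : x = (Real.exp (1/(q:ℝ)))⁻¹ := by
      rw [hxdef, ← Real.exp_neg]
    rw [h2, inv_le_iff_one_le_mul₀ (Real.exp_pos _)]
    calc (1:ℝ) = ((q:ℝ)/((q:ℝ)+1)) * (1 + 1/(q:ℝ)) := by field_simp
      _ ≤ ((q:ℝ)/((q:ℝ)+1)) * Real.exp (1/(q:ℝ)) := by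
          apply mul_le_mul_of_nonneg_left h1 (by positivity)
  have h1x : 1/((q:ℝ)+1) ≤ 1 - x := by
    have h : (q:ℝ)/((q:ℝ)+1) = 1 - 1/((q:ℝ)+1) := by field_simp; ring
    rw [h] at hxle; linarith
  have h1x0 : 0 < 1 - x := by
    have : (0:ℝ) < 1/((q:ℝ)+1) := by positivity
    linarith
  have hs1 : HasSum (fun k : ℕ => x ^ (k+1) / ((k:ℝ)+1)) (-Real.log (1-x)) :=
    Real.hasSum_pow_div_log_of_abs_lt_one hxabs
  have hs2 : HasSum (fun k : ℕ => x ^ (k+1)) (x * (1-x)⁻¹) := by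
    have := (hasSum_geometric_of_lt_one hx0.le hx1).mul_left x
    have h' : (fun k : ℕ => x ^ (k+1)) = fun i => x * x ^ i := by
      funext k
      ring
    rw [h']
    exact this
  have hsum : HasSum (fun k : ℕ => L / q * (x ^ (k+1) / ((k:ℝ)+1))
      + (1/((q:ℝ)*((q:ℝ)+1))) * x ^ (k+1))
      (L / q * (-Real.log (1-x)) + (1/((q:ℝ)*((q:ℝ)+1))) * (x * (1-x)⁻¹)) :=
    (hs1.mul_left _).add (hs2.mul_left _)
  have hsumshift : Summable (fun k : ℕ => g (k+1)) := by
    exact (summable_nat_add_iff 1).mpr hsumg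
  have hT1 : (∑' k : ℕ, g (k+1))
      ≤ L / q * (-Real.log (1-x)) + (1/((q:ℝ)*((q:ℝ)+1))) * (x * (1-x)⁻¹) := by
    rw [← hsum.tsum_eq]
    exact Summable.tsum_le_tsum htermwise hsumshift hsum.summable
  have hb1 : -Real.log (1-x) ≤ Real.log ((q:ℝ)+1) := by
    rw [← Real.log_inv]
    apply Real.log_le_log (by positivity)
    rw [inv_le_comm₀ h1x0 (by positivity)]
    calc ((q:ℝ)+1)⁻¹ = 1/((q:ℝ)+1) := by rw [one_div]
      _ ≤ 1 - x := h1x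
  have hb2 : x * (1-x)⁻¹ ≤ (q:ℝ) := by
    calc x * (1-x)⁻¹ ≤ ((q:ℝ)/((q:ℝ)+1)) * ((q:ℝ)+1) := by
          apply mul_le_mul hxle ?_ (by positivity) (by positivity)
          rw [inv_le_comm₀ h1x0 (by positivity)]
          calc ((q:ℝ)+1)⁻¹ = 1/((q:ℝ)+1) := by rw [one_div]
            _ ≤ 1 - x := h1x
      _ = (q:ℝ) := by field_simp
  have hc2 : (1/((q:ℝ)*((q:ℝ)+1))) * (q:ℝ) = 1/((q:ℝ)+1) := by field_simp
  have hT : (∑' k : ℕ, g (k+1)) ≤ L / q * Real.log ((q:ℝ)+1) + 1/((q:ℝ)+1) := by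
    calc (∑' k : ℕ, g (k+1))
        ≤ L / q * (-Real.log (1-x)) + (1/((q:ℝ)*((q:ℝ)+1))) * (x * (1-x)⁻¹) := hT1
      _ ≤ L / q * Real.log ((q:ℝ)+1) + (1/((q:ℝ)*((q:ℝ)+1))) * (q:ℝ) := by
          apply add_le_add
          · exact mul_le_mul_of_nonneg_left hb1 (by positivity)
          · exact mul_le_mul_of_nonneg_left hb2 (by positivity)
      _ = L / q * Real.log ((q:ℝ)+1) + 1/((q:ℝ)+1) := by rw [hc2]
  have hT0 : 0 ≤ ∑' k : ℕ, g (k+1) := tsum_nonneg fun k => hg0 (k+1)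
  -- first term bound
  have hfirst : |g 0 - vonMangoldt a / (a:ℝ)| ≤ Real.log q / (q:ℝ)^2 := by
    rw [hg0eq]
    have hΛ0 : (0:ℝ) ≤ vonMangoldt a := vonMangoldt_nonneg
    have hΛ : vonMangoldt a ≤ Real.log q := by
      calc (vonMangoldt a : ℝ) ≤ Real.log a := vonMangoldt_le_log
        _ ≤ Real.log q := Real.log_le_log hA0 (by exact_mod_cast haq.le)
    have he1 : Real.exp (-(a:ℝ) / (q:ℝ)^2) ≤ 1 := by
      apply Real.exp_le_one_iff.mpr
      rw [neg_div]
      simp only [Left.neg_nonpos_iff]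
      positivity
    have he2 : 1 - Real.exp (-(a:ℝ) / (q:ℝ)^2) ≤ (a:ℝ)/(q:ℝ)^2 := by
      have h1 := Real.add_one_le_exp (-(a:ℝ) / (q:ℝ)^2)
      ring_nf at h1 ⊢
      linarith
    have key : vonMangoldt a / (a:ℝ) * Real.exp (-(a:ℝ) / (q:ℝ)^2) - vonMangoldt a / a
        = -(vonMangoldt a / (a:ℝ) * (1 - Real.exp (-(a:ℝ) / (q:ℝ)^2))) := by ring
    rw [key, abs_neg, abs_of_nonneg (mul_nonneg (by positivity) (by linarith))]
    calc vonMangoldt a / (a:ℝ) * (1 - Real.exp (-(a:ℝ) / (q:ℝ)^2))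
        ≤ Real.log q / (a:ℝ) * ((a:ℝ)/(q:ℝ)^2) := by
          apply mul_le_mul (by gcongr) he2 (by linarith) (by positivity)
      _ = Real.log q * (1/(q:ℝ)^2) * ((a:ℝ)/(a:ℝ)) := by ring
      _ = Real.log q / (q:ℝ)^2 := by rw [div_self (ne_of_gt hA0)]; ring
  -- assemble
  rw [hreindex, hsplit]
  have habs : |g 0 + (∑' k : ℕ, g (k+1)) - vonMangoldt a / (a:ℝ)|
      ≤ |g 0 - vonMangoldt a / (a:ℝ)| + (∑' k : ℕ, g (k+1)) := by
    have h := abs_add_le (g 0 - vonMangoldt a / (a:ℝ)) (∑' k : ℕ, g (k+1))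
    rw [abs_of_nonneg hT0] at h
    have heq : g 0 + (∑' k : ℕ, g (k+1)) - vonMangoldt a / (a:ℝ)
        = (g 0 - vonMangoldt a / (a:ℝ)) + (∑' k : ℕ, g (k+1)) := by ring
    rw [heq]
    exact h
  -- final numeric inequality
  have hfinal : Real.log q / (q:ℝ)^2
      + (L / q * Real.log ((q:ℝ)+1) + 1/((q:ℝ)+1))
      ≤ 2 * (Real.log q)^2 / q + 3.935 * Real.log q / q := by
    rw [hLdef]
    set l : ℝ := Real.log q with hldef
    have hl2 : 0.6931471803 ≤ l := by
      calc (0.6931471803:ℝ) ≤ Real.log 2 := Real.log_two_gt_d9.le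
        _ ≤ l := Real.log_le_log (by norm_num) hQ2
    have hl0 : (0:ℝ) ≤ l := by linarith
    have hd1 : Real.log ((q:ℝ)+1) ≤ l + 1/(q:ℝ) := by
      have h5 : Real.log (((q:ℝ)+1)/(q:ℝ)) ≤ ((q:ℝ)+1)/(q:ℝ) - 1 :=
        Real.log_le_sub_one_of_pos (by positivity)
      have h6 : Real.log (((q:ℝ)+1)/(q:ℝ)) = Real.log ((q:ℝ)+1) - l :=
        Real.log_div (by positivity) (by positivity)
      have h7 : ((q:ℝ)+1)/(q:ℝ) - 1 = 1/(q:ℝ) := by field_simp; ring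
      linarith [h7 ▸ h5, h6]
    have hdl : l ≤ Real.log ((q:ℝ)+1) := Real.log_le_log hQ0 (by linarith)
    set u : ℝ := 1/(q:ℝ) with hudef
    have hu0 : 0 < u := by positivity
    have huh : u ≤ 1/2 := by
      rw [hudef, div_le_div_iff₀ hQ0 (by norm_num)]
      linarith
    have e1 : l / (q:ℝ)^2 = l * u^2 := by rw [hudef]; field_simp
    have e2 : (l + Real.log ((q:ℝ)+1)) / q * Real.log ((q:ℝ)+1)
        = (l + Real.log ((q:ℝ)+1)) * Real.log ((q:ℝ)+1) * u := by rw [hudef]; ring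
    have e3 : 1/((q:ℝ)+1) ≤ u := by
      rw [hudef]
      apply div_le_div_of_nonneg_left (by norm_num) hQ0 (by linarith)
    have e4 : (l + Real.log ((q:ℝ)+1)) * Real.log ((q:ℝ)+1) ≤ (2*l + u) * (l + u) := by
      apply mul_le_mul (by linarith) (by linarith) hlogq10 (by positivity)
    have e5 : 2 * l^2 / (q:ℝ) = 2 * l^2 * u := by rw [hudef]; ring
    have e6 : 3.935 * l / (q:ℝ) = 3.935 * l * u := by rw [hudef]; ring
    rw [e1, e2, e5, e6]
    have hmain : 4*l*u + u^2 + 1 ≤ 3.935 * l := by nlinarith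
    nlinarith [mul_nonneg hu0.le (sub_nonneg.mpr hmain),
      mul_le_mul_of_nonneg_right e4 hu0.le]
  calc |g 0 + (∑' k : ℕ, g (k+1)) - vonMangoldt a / (a:ℝ)|
      ≤ |g 0 - vonMangoldt a / (a:ℝ)| + (∑' k : ℕ, g (k+1)) := habs
    _ ≤ Real.log q / (q:ℝ)^2 + (L / q * Real.log ((q:ℝ)+1) + 1/((q:ℝ)+1)) :=
        add_le_add hfirst hT
    _ ≤ 2 * (Real.log q)^2 / q + 3.935 * Real.log q / q := hfinal
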